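/- Let G be a simple graph on a finite vertex type V with edge weights w : Sym2 V → ℝ that are injective on the edge set of G. Let E' be a subset of the edge set of G, let G' be the spanning subgraph of G with edge set E', and let F' be a minimum spanning forest of G'. Then every edge of E' that does not belong to F' does not belong to any minimum spanning forest of G; equivalently, for every minimum spanning forest F of G, the edges of F lying in E' all belong to F'. -/

import Mathlib

/-- `F` is a spanning forest of `H`: a spanning subgraph (edges a subset of those of `H`)
that is acyclic and has the same reachability relation as `H`. -/
def IsSpanningForest {V : Type*} (H F : SimpleGraph V) : Prop :=
  F ≤ H ∧ F.IsAcyclic ∧ ∀ u v : V, F.Reachable u v ↔ H.Reachable u v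

/-- The total weight of the edges of a graph. -/
noncomputable def totalWeight {V : Type*} (w : Sym2 V → ℝ) (F : SimpleGraph V) : ℝ :=
  ∑ᶠ e ∈ F.edgeSet, w e

/-- `F` is a minimum spanning forest of `H` with respect to the weights `w`. -/
def IsMSF {V : Type*} (w : Sym2 V → ℝ) (H F : SimpleGraph V) : Prop :=
  IsSpanningForest H F ∧
    ∀ F' : SimpleGraph V, IsSpanningForest H F' → totalWeight w F ≤ totalWeight w F'

/-- The spanning subgraph `G_{≤ t}` of `G` consisting of the edges of `G` of weight at most `t`. -/
def leSub {V : Type*} (w : Sym2 V → ℝ) (G : SimpleGraph V) (t : ℝ) : SimpleGraph V :=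
  SimpleGraph.fromEdgeSet {e ∈ G.edgeSet | w e ≤ t}

section MSFAux
open SimpleGraph
variable {V : Type*}




-- If x,y are already reachable in G, adding the edge s(x,y) does not change reachability.
lemma aux_reachable_sup_edge {G : SimpleGraph V} {x y : V} (hxy : G.Reachable x y)
    {u v : V} (h : (G ⊔ SimpleGraph.fromEdgeSet {s(x, y)}).Reachable u v) :
    G.Reachable u v := by
  obtain ⟨p⟩ := h
  induction p with
  | nil => exact Reachable.refl _
  | cons h q ih =>
    rcases h with h | h
    · exact (Adj.reachable h).trans ih
    · rw [fromEdgeSet_adj, Set.mem_singleton_iff, Sym2.eq_iff] at h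
      rcases h.1 with ⟨rfl, rfl⟩ | ⟨rfl, rfl⟩
      · exact hxy.trans ih
      · exact hxy.symm.trans ih

-- Splitting a walk at a removed edge.
lemma aux_walk_delete_edge {G : SimpleGraph V} {x y : V}
    {u v : V} (p : G.Walk u v) :
    (G.deleteEdges {s(x, y)}).Reachable u v ∨
      ((G.deleteEdges {s(x, y)}).Reachable u x ∧ (G.deleteEdges {s(x, y)}).Reachable y v) ∨
      ((G.deleteEdges {s(x, y)}).Reachable u y ∧ (G.deleteEdges {s(x, y)}).Reachable x v) := by
  induction p with
  | nil => exact Or.inl (Reachable.refl _)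
  | @cons u b v h q ih =>
    by_cases hub : s(u, b) = s(x, y)
    · rw [Sym2.eq_iff] at hub
      rcases hub with ⟨rfl, rfl⟩ | ⟨rfl, rfl⟩
      · rcases ih with h1 | ⟨h1, h2⟩ | ⟨h1, h2⟩
        · exact Or.inr (Or.inl ⟨Reachable.refl _, h1⟩)
        · exact Or.inr (Or.inl ⟨Reachable.refl _, h2⟩)
        · exact Or.inl h2
      · rcases ih with h1 | ⟨h1, h2⟩ | ⟨h1, h2⟩
        · exact Or.inr (Or.inr ⟨Reachable.refl _, h1⟩)
        · exact Or.inl h2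
        · exact Or.inr (Or.inr ⟨Reachable.refl _, h2⟩)
    · have hadj : (G.deleteEdges {s(x, y)}).Adj u b := by
        rw [deleteEdges_adj]
        exact ⟨h, by simpa using hub⟩
      rcases ih with h1 | ⟨h1, h2⟩ | ⟨h1, h2⟩
      · exact Or.inl (hadj.reachable.trans h1)
      · exact Or.inr (Or.inl ⟨hadj.reachable.trans h1, h2⟩)
      · exact Or.inr (Or.inr ⟨hadj.reachable.trans h1, h2⟩)

-- A walk from inside a set S to outside contains a crossing edge.
lemma aux_exists_crossing {G : SimpleGraph V} (P : V → Prop) :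
    ∀ {u v : V} (p : G.Walk u v), P u → ¬ P v →
      ∃ a b, G.Adj a b ∧ P a ∧ ¬ P b ∧ s(a, b) ∈ p.edges := by
  intro u v p
  induction p with
  | nil => intro hu hv; exact absurd hu hv
  | @cons u b v h q ih =>
    intro hu hv
    by_cases hb : P b
    · obtain ⟨a, c, h1, h2, h3, h4⟩ := ih hb hv
      exact ⟨a, c, h1, h2, h3, by simp [Walk.edges_cons, h4]⟩
    · exact ⟨u, b, h, hu, hb, by simp [Walk.edges_cons]⟩

-- Swapping an edge of a spanning forest for a reconnecting edge of H.
lemma aux_swap {H F : SimpleGraph V} (hF : IsSpanningForest H F)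
    {x y : V} (hfF : F.Adj x y) {a b : V} (hab : H.Adj a b)
    (hnr : ¬ (F.deleteEdges {s(x, y)}).Reachable a b) :
    IsSpanningForest H (F.deleteEdges {s(x, y)} ⊔ SimpleGraph.fromEdgeSet {s(a, b)}) := by
  obtain ⟨hle, hac, hreach⟩ := hF
  set Gf := F.deleteEdges {s(x, y)} with hGf
  set F2 := Gf ⊔ SimpleGraph.fromEdgeSet {s(a, b)} with hF2
  have hGfle : Gf ≤ F := deleteEdges_le _
  have hGfF2 : Gf ≤ F2 := le_sup_left
  have hF2le : F2 ≤ H := by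
    apply sup_le (hGfle.trans hle)
    intro p q hpq
    rw [fromEdgeSet_adj, Set.mem_singleton_iff, Sym2.eq_iff] at hpq
    rcases hpq.1 with ⟨rfl, rfl⟩ | ⟨rfl, rfl⟩
    · exact hab
    · exact hab.symm
  have hF2ab : F2.Adj a b := by
    apply Or.inr
    rw [fromEdgeSet_adj]
    exact ⟨rfl, hab.ne⟩
  -- F2 is acyclic
  have hF2ac : F2.IsAcyclic := by
    intro u0 c hc
    by_cases hec : s(a, b) ∈ c.edges
    · have := (adj_and_reachable_delete_edges_iff_exists_cycle (G := F2)).mpr ⟨u0, c, hc, hec⟩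
      apply hnr
      refine this.2.mono ?_
      intro p q hpq
      obtain ⟨hpq1, hpq2⟩ := hpq
      rw [fromEdgeSet_adj, Set.mem_singleton_iff] at hpq2
      rcases hpq1 with h | h
      · exact h
      · rw [fromEdgeSet_adj, Set.mem_singleton_iff] at h
        exact absurd ⟨h.1, h.2⟩ hpq2
    · -- transfer the cycle into Gf
      have hedges : ∀ e ∈ c.edges, e ∈ Gf.edgeSet := by
        intro e he
        have := c.edges_subset_edgeSet he
        rw [hF2, edgeSet_sup, edgeSet_fromEdgeSet] at this
        rcases this with h | h
        · exact h
        · exact absurd (h.1 ▸ he) hec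
      have hedgesF : ∀ e ∈ c.edges, e ∈ F.edgeSet :=
        fun e he => edgeSet_mono hGfle (hedges e he)
      exact hac (c.transfer F hedgesF) (hc.transfer hedgesF)
  -- F2 has the same reachability as H
  have hFab : F.Reachable a b := (hreach a b).mpr hab.reachable
  have hF2xy : F2.Reachable x y := by
    obtain ⟨p⟩ := hFab
    rcases aux_walk_delete_edge (x := x) (y := y) p with h1 | ⟨h1, h2⟩ | ⟨h1, h2⟩
    · exact absurd h1 hnr
    · exact (h1.mono hGfF2).symm.trans (hF2ab.reachable.trans (h2.mono hGfF2).symm)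
    · exact (h2.mono hGfF2).trans (hF2ab.reachable.symm.trans (h1.mono hGfF2))
  have hFF2 : ∀ u v : V, F.Reachable u v → F2.Reachable u v := by
    intro u v h
    apply aux_reachable_sup_edge hF2xy
    refine h.mono ?_
    intro p q hpq
    by_cases hpqf : s(p, q) = s(x, y)
    · exact Or.inr (by rw [fromEdgeSet_adj]; exact ⟨Set.mem_singleton_iff.mpr hpqf, hpq.ne⟩)
    · exact Or.inl (Or.inl (by rw [deleteEdges_adj]; exact ⟨hpq, by simpa using hpqf⟩))
  refine ⟨hF2le, hF2ac, fun u v => ⟨fun h => h.mono hF2le, fun h => hFF2 u v ((hreach u v).mpr h)⟩⟩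

lemma aux_swap_edgeSet {F : SimpleGraph V} {f : Sym2 V} {a b : V} (hab : a ≠ b) :
    (F.deleteEdges {f} ⊔ SimpleGraph.fromEdgeSet {s(a, b)}).edgeSet
      = (F.edgeSet \ {f}) ∪ {s(a, b)} := by
  rw [edgeSet_sup, edgeSet_deleteEdges, edgeSet_fromEdgeSet]
  congr 1
  ext e
  simp only [Set.mem_diff, Set.mem_singleton_iff, Set.mem_setOf_eq, and_iff_left_iff_imp]
  rintro rfl
  simpa using hab

lemma aux_totalWeight_swap [Fintype V] (w : Sym2 V → ℝ) {F F2 : SimpleGraph V} {e f : Sym2 V}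
    (hf : f ∈ F.edgeSet) (he : e ∉ F.edgeSet)
    (h2 : F2.edgeSet = (F.edgeSet \ {f}) ∪ {e}) :
    totalWeight w F2 = totalWeight w F - w f + w e := by
  classical
  have hFfin : F.edgeSet.Finite := Set.toFinite _
  have h2fin : F2.edgeSet.Finite := Set.toFinite _
  rw [totalWeight, totalWeight, ← Set.Finite.coe_toFinset hFfin, ← Set.Finite.coe_toFinset h2fin,
    finsum_mem_coe_finset, finsum_mem_coe_finset]
  have hins : h2fin.toFinset = insert e (hFfin.toFinset.erase f) := by
    ext x
    simp only [Set.Finite.mem_toFinset, h2, Set.mem_union, Set.mem_diff, Set.mem_singleton_iff,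
      Finset.mem_insert, Finset.mem_erase, Set.Finite.mem_toFinset]
    tauto
  rw [hins, Finset.sum_insert (by simp only [Finset.mem_erase, Set.Finite.mem_toFinset]; exact fun h => he h.2),
    ← Finset.sum_erase_add hFfin.toFinset w (by simpa using hf)]
  ring

lemma aux_cut_property [Fintype V] {G F : SimpleGraph V} {w : Sym2 V → ℝ} (hF : IsMSF w G F)
    {a b : V} (he : F.Adj a b) {x y : V} (hf : G.Adj x y)
    (hx : (F.deleteEdges {s(a, b)}).Reachable a x)
    (hy : ¬ (F.deleteEdges {s(a, b)}).Reachable a y) :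
    w s(a, b) ≤ w s(x, y) := by
  by_cases hef : s(x, y) = s(a, b)
  · rw [hef]
  · have hnr : ¬ (F.deleteEdges {s(a, b)}).Reachable x y :=
      fun h => hy (hx.trans h)
    have hfn : s(x, y) ∉ F.edgeSet := by
      intro hmem
      apply hnr
      apply Adj.reachable
      rw [deleteEdges_adj]
      exact ⟨hmem, by simpa using hef⟩
    have hswap := aux_swap hF.1 he hf hnr
    have hW := aux_totalWeight_swap w ((F.mem_edgeSet).mpr he) hfn
      (aux_swap_edgeSet (F := F) (f := s(a, b)) hf.ne)
    have := hF.2 _ hswap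
    rw [hW] at this
    linarith


end MSFAux

open SimpleGraph in
theorem msf_subgraph_filter {V : Type*} [Fintype V] (G : SimpleGraph V) (w : Sym2 V → ℝ)
    (hinj : Set.InjOn w G.edgeSet)
    (E' : Set (Sym2 V)) (hE' : E' ⊆ G.edgeSet)
    (F' : SimpleGraph V) (hF' : IsMSF w (SimpleGraph.fromEdgeSet E') F')
    (F : SimpleGraph V) (hF : IsMSF w G F) :
    ∀ e ∈ E', e ∈ F.edgeSet → e ∈ F'.edgeSet := by
  classical
  intro e
  induction e using Sym2.ind with
  | _ a b =>
  intro heE' heF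
  by_contra heF'
  have hGab : G.Adj a b := (G.mem_edgeSet).mp (hE' heE')
  have hab : a ≠ b := hGab.ne
  have hG'ab : (SimpleGraph.fromEdgeSet E').Adj a b := by
    rw [fromEdgeSet_adj]; exact ⟨heE', hab⟩
  -- the path from a to b in F'
  obtain ⟨p0⟩ := (hF'.1.2.2 a b).mpr hG'ab.reachable
  set pp : F'.Path a b := p0.toPath with hpp
  -- the cut defined by removing s(a,b) from F
  set S : V → Prop := fun z => (F.deleteEdges {s(a, b)}).Reachable a z with hS
  have hSa : S a := Reachable.refl _
  have hSb : ¬ S b := by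
    have hbridge := isAcyclic_iff_forall_adj_isBridge.mp hF.1.2.1 ((F.mem_edgeSet).mp heF)
    rw [isBridge_iff] at hbridge
    exact hbridge
  obtain ⟨x, y, hxyadj, hSx, hSy, hxyedge⟩ := aux_exists_crossing S (pp : F'.Walk a b) hSa hSb
  have hxyF' : s(x, y) ∈ F'.edgeSet := (F'.mem_edgeSet).mpr hxyadj
  have hxyG : s(x, y) ∈ G.edgeSet := by
    have h1 : s(x, y) ∈ (SimpleGraph.fromEdgeSet E').edgeSet := edgeSet_mono hF'.1.1 hxyF'
    rw [edgeSet_fromEdgeSet] at h1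
    exact hE' h1.1
  have hne : s(x, y) ≠ s(a, b) := by
    rintro h
    rw [h] at hxyF'
    exact heF' hxyF'
  -- strict weight inequality across the cut
  have hwlt : w s(a, b) < w s(x, y) := by
    have hle := aux_cut_property hF ((F.mem_edgeSet).mp heF) ((G.mem_edgeSet).mp hxyG) hSx hSy
    rcases hle.lt_or_eq with h | h
    · exact h
    · exact absurd (hinj (hE' heE') hxyG h) (Ne.symm hne)
  -- a and b are not reachable after deleting s(x,y) from F'
  have hnr : ¬ (F'.deleteEdges {s(x, y)}).Reachable a b := by
    rintro ⟨q0⟩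
    have hq0 : ∀ e ∈ q0.edges, e ∈ F'.edgeSet :=
      fun e h => edgeSet_mono (deleteEdges_le _) (q0.edges_subset_edgeSet h)
    have hqpath : (q0.toPath : (F'.deleteEdges {s(x, y)}).Walk a b).IsPath := q0.toPath.2
    have hq1 : ∀ e ∈ (q0.toPath : (F'.deleteEdges {s(x, y)}).Walk a b).edges, e ∈ F'.edgeSet :=
      fun e h => hq0 e (Walk.edges_toPath_subset q0 h)
    set q2 : F'.Path a b := ⟨(q0.toPath : (F'.deleteEdges {s(x, y)}).Walk a b).transfer F' hq1,
      hqpath.transfer hq1⟩ with hq2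
    have huniq := isAcyclic_iff_path_unique.mp hF'.1.2.1 pp q2
    have hmem : s(x, y) ∈ (q2 : F'.Walk a b).edges := by rw [← huniq]; exact hxyedge
    rw [hq2] at hmem
    simp only [Walk.edges_transfer] at hmem
    have := (q0.toPath : (F'.deleteEdges {s(x, y)}).Walk a b).edges_subset_edgeSet hmem
    rw [edgeSet_deleteEdges] at this
    exact this.2 rfl
  -- swap in F'
  have hswap := aux_swap hF'.1 hxyadj hG'ab hnr
  have heF'2 : s(a, b) ∉ F'.edgeSet := heF'
  have hW := aux_totalWeight_swap w hxyF' heF'2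
    (aux_swap_edgeSet (F := F') (f := s(x, y)) hab)
  have := hF'.2 _ hswap
  rw [hW] at this
  linarith
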